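/- Every finite chain ring is duo (every left ideal and every right ideal is two-sided) and symmetric (for all a, b, c, if a*b*c = 0 then b*a*c = 0). -/

import Mathlib

/-- A ring is a (left) chain ring if its left ideals are totally ordered by inclusion. -/
def IsChainRing (R : Type*) [Ring R] : Prop :=
  ∀ I J : Ideal R, I ≤ J ∨ J ≤ I

/-- An additive subgroup is a right ideal if it is closed under right multiplication. -/
def IsRightIdeal {R : Type*} [Ring R] (S : AddSubgroup R) : Prop :=
  ∀ a ∈ S, ∀ r : R, a * r ∈ S

/-- A ring is duo if every left ideal and every right ideal is two-sided. -/
def IsDuoRing (R : Type*) [Ring R] : Prop :=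
  (∀ I : Ideal R, ∀ a ∈ I, ∀ r : R, a * r ∈ I) ∧
  (∀ S : AddSubgroup R, IsRightIdeal S → ∀ a ∈ S, ∀ r : R, r * a ∈ S)

/-- A ring is symmetric if `a*b*c = 0` implies `b*a*c = 0`. -/
def IsSymmetricRing (R : Type*) [Ring R] : Prop :=
  ∀ a b c : R, a * b * c = 0 → b * a * c = 0

section Aux

variable {R : Type*} [Ring R] [Finite R]

/-- In a finite ring, one-sided inverses are two-sided. -/
lemma aux_mul_one_comm (a b : R) (h : a * b = 1) : b * a = 1 := by
  have hinj : Function.Injective (fun x : R => b * x) := by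
    intro x y hxy
    have h2 := congrArg (fun z => a * z) hxy
    simpa [← mul_assoc, h] using h2
  obtain ⟨c, hc0⟩ := (Finite.injective_iff_surjective.mp hinj) 1
  have hc : b * c = 1 := hc0
  have hac : a = c := by
    calc a = a * (b * c) := by rw [hc]; simp
    _ = (a * b) * c := by rw [mul_assoc]
    _ = c := by rw [h, one_mul]
  simpa [← hac] using hc

lemma aux_isUnit_of_left {a : R} (b : R) (h : b * a = 1) : IsUnit a :=
  ⟨⟨a, b, aux_mul_one_comm b a h, h⟩, rfl⟩

lemma aux_isUnit_of_right {a : R} (b : R) (h : a * b = 1) : IsUnit a :=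
  ⟨⟨a, b, h, aux_mul_one_comm a b h⟩, rfl⟩

lemma aux_nonunit_mul_left (r : R) {x : R} (hx : ¬IsUnit x) : ¬IsUnit (r * x) := by
  intro h
  obtain ⟨u, hu⟩ := h
  apply hx
  apply aux_isUnit_of_left ((↑u⁻¹ : R) * r)
  rw [mul_assoc, ← hu, u.inv_mul]

lemma aux_nonunit_mul_right (r : R) {x : R} (hx : ¬IsUnit x) : ¬IsUnit (x * r) := by
  intro h
  obtain ⟨u, hu⟩ := h
  apply hx
  apply aux_isUnit_of_right (r * (↑u⁻¹ : R))
  rw [← mul_assoc, ← hu, u.mul_inv]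

lemma aux_nonunit_add (hchain : IsChainRing R) {x y : R}
    (hx : ¬IsUnit x) (hy : ¬IsUnit y) : ¬IsUnit (x + y) := by
  rcases hchain (Ideal.span {x}) (Ideal.span {y}) with h | h
  · have hxy : x ∈ Ideal.span ({y} : Set R) :=
      h (Ideal.subset_span (Set.mem_singleton x))
    obtain ⟨r, hr⟩ := Ideal.mem_span_singleton'.mp hxy
    have : x + y = (r + 1) * y := by rw [add_mul, one_mul, hr]
    rw [this]
    exact aux_nonunit_mul_left _ hy
  · have hxy : y ∈ Ideal.span ({x} : Set R) :=
      h (Ideal.subset_span (Set.mem_singleton y))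
    obtain ⟨r, hr⟩ := Ideal.mem_span_singleton'.mp hxy
    have : x + y = (1 + r) * x := by rw [add_mul, one_mul, hr]
    rw [this]
    exact aux_nonunit_mul_left _ hx

lemma aux_unit_one_sub (hchain : IsChainRing R) {x : R} (hx : ¬IsUnit x) :
    IsUnit (1 - x) := by
  by_contra h
  have := aux_nonunit_add hchain h hx
  simp at this

lemma aux_nilpotent (hchain : IsChainRing R) {x : R} (hx : ¬IsUnit x) :
    ∃ k, 0 < k ∧ x ^ k = 0 := by
  obtain ⟨a, b, hab, hpow⟩ := Finite.exists_ne_map_eq_of_infinite (fun n : ℕ => x ^ n)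
  wlog hlt : a < b generalizing a b
  · exact this b a hab.symm hpow.symm (by omega)
  have hz : ¬IsUnit (x ^ (b - a)) := by
    have : x ^ (b - a) = x ^ (b - a - 1) * x := by
      rw [← pow_succ]; congr 1; omega
    rw [this]; exact aux_nonunit_mul_left _ hx
  have hu := aux_unit_one_sub hchain hz
  obtain ⟨u, hu⟩ := hu
  have hxa : x ^ a * (1 - x ^ (b - a)) = 0 := by
    have : x ^ a * x ^ (b - a) = x ^ b := by rw [← pow_add]; congr 1; omega
    rw [mul_sub, mul_one, this, hpow, sub_self]
  have hxa0 : x ^ a = 0 := by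
    have := congrArg (fun z => z * (↑u⁻¹ : R)) hxa
    simpa [← hu, mul_assoc, u.mul_inv] using this
  have ha1 : 0 < a := by
    rcases Nat.eq_zero_or_pos a with h0 | h0
    · exfalso
      apply hx
      have h10 : (1 : R) = 0 := by simpa [h0] using hxa0
      exact aux_isUnit_of_right x (by
        calc x * x = x * x * 1 := by rw [mul_one]
        _ = 0 := by rw [h10, mul_zero]
        _ = 1 := by rw [← h10])
    · exact h0
  exact ⟨a, ha1, hxa0⟩

/-- Existence of a generator of the maximal ideal, nilpotent, with left-commutation. -/
lemma aux_exists_theta (hchain : IsChainRing R) :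
    ∃ (θ : R) (N : ℕ), θ ^ N = 0 ∧ (∀ x : R, ¬IsUnit x → ∃ r, x = r * θ) ∧
      (∀ r : R, ∃ s, θ * r = s * θ) := by
  by_cases hall : ∀ x : R, IsUnit x
  · -- trivial ring
    have h0 : IsUnit (0 : R) := hall 0
    obtain ⟨u, hu⟩ := h0
    have h01 : (0 : R) = 1 := by
      have h2 := u.inv_mul
      rw [hu, mul_zero] at h2
      exact h2
    haveI : Subsingleton R := subsingleton_of_zero_eq_one h01
    exact ⟨0, 1, by simp, fun x hx => ⟨0, Subsingleton.elim _ _⟩,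
      fun r => ⟨0, Subsingleton.elim _ _⟩⟩
  · push_neg at hall
    obtain ⟨x₀, hx₀⟩ := hall
    obtain ⟨θ, hθmem, hθmax⟩ := Set.Finite.exists_maximalFor
      (fun x : R => Ideal.span {x}) {x : R | ¬IsUnit x} (Set.toFinite _) ⟨x₀, hx₀⟩
    have hθnu : ¬IsUnit θ := hθmem
    have hgen : ∀ x : R, ¬IsUnit x → ∃ r, x = r * θ := by
      intro x hx
      rcases hchain (Ideal.span {x}) (Ideal.span {θ}) with h | h
      · have : x ∈ Ideal.span ({θ} : Set R) :=
          h (Ideal.subset_span (Set.mem_singleton x))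
        obtain ⟨r, hr⟩ := Ideal.mem_span_singleton'.mp this
        exact ⟨r, hr.symm⟩
      · have heq := le_antisymm h (hθmax hx h)
        have : x ∈ Ideal.span ({θ} : Set R) := by
          rw [heq]
          exact Ideal.subset_span (Set.mem_singleton x)
        obtain ⟨r, hr⟩ := Ideal.mem_span_singleton'.mp this
        exact ⟨r, hr.symm⟩
    obtain ⟨N, hN0, hN⟩ := aux_nilpotent hchain hθnu
    refine ⟨θ, N, hN, hgen, fun r => ?_⟩
    exact hgen (θ * r) (aux_nonunit_mul_right r hθnu)

end Aux

theorem finite_chain_ring_duo_and_symmetric (R : Type*) [Ring R] [Finite R]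
    (hchain : IsChainRing R) : IsDuoRing R ∧ IsSymmetricRing R := by
  obtain ⟨θ, N, hθN, hgen, comm1⟩ := aux_exists_theta hchain
  -- commutation with powers of θ
  have comm_pow : ∀ (k : ℕ) (r : R), ∃ s, θ ^ k * r = s * θ ^ k := by
    intro k
    induction k with
    | zero => exact fun r => ⟨r, by simp⟩
    | succ k ih =>
      intro r
      obtain ⟨s, hs⟩ := comm1 r
      obtain ⟨t, ht⟩ := ih s
      refine ⟨t, ?_⟩
      calc θ ^ (k + 1) * r = θ ^ k * (θ * r) := by rw [pow_succ, mul_assoc]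
      _ = θ ^ k * (s * θ) := by rw [hs]
      _ = (θ ^ k * s) * θ := by rw [mul_assoc]
      _ = (t * θ ^ k) * θ := by rw [ht]
      _ = t * θ ^ (k + 1) := by rw [mul_assoc, ← pow_succ]
  -- if θ is a multiple of θ², then θ = 0
  have theta_sq : (∃ c, θ = c * θ ^ 2) → θ = 0 := by
    rintro ⟨c, hc⟩
    have key : ∀ k : ℕ, ∃ d, θ = d * θ ^ (k + 1) := by
      intro k
      induction k with
      | zero => exact ⟨1, by simp⟩
      | succ k ih =>
        obtain ⟨d, hd⟩ := ih
        obtain ⟨s, hs⟩ := comm_pow k c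
        refine ⟨d * s, ?_⟩
        calc θ = d * θ ^ (k + 1) := hd
        _ = d * (θ ^ k * θ) := by rw [pow_succ]
        _ = d * (θ ^ k * (c * θ ^ 2)) := by rw [← hc]
        _ = d * ((θ ^ k * c) * θ ^ 2) := by rw [mul_assoc]
        _ = d * ((s * θ ^ k) * θ ^ 2) := by rw [hs]
        _ = (d * s) * (θ ^ k * θ ^ 2) := by rw [← mul_assoc, ← mul_assoc, mul_assoc (d * s)]
        _ = (d * s) * θ ^ (k + 1 + 1) := by rw [← pow_add]
    obtain ⟨d, hd⟩ := key N
    have : θ ^ (N + 1) = 0 := by rw [pow_succ, hθN, zero_mul]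
    rw [hd, this, mul_zero]
  -- commutation with units, unit output
  have comm1u : ∀ u : Rˣ, ∃ v : Rˣ, θ * (u : R) = (v : R) * θ := by
    intro u
    obtain ⟨s, hs⟩ := comm1 (u : R)
    by_cases hsu : IsUnit s
    · exact ⟨hsu.unit, by rw [hs, IsUnit.unit_spec]⟩
    · -- then θ = c * θ², hence θ = 0
      obtain ⟨s', hs'⟩ := hgen s hsu
      obtain ⟨s₂, hs₂⟩ := comm1 (↑u⁻¹ : R)
      obtain ⟨s₃, hs₃⟩ := comm1 s₂
      have hθ0 : θ = 0 := by
        apply theta_sq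
        refine ⟨s' * s₃, ?_⟩
        calc θ = θ * ((u : R) * (↑u⁻¹ : R)) := by rw [u.mul_inv, mul_one]
        _ = (θ * (u : R)) * (↑u⁻¹ : R) := by rw [mul_assoc]
        _ = (s * θ) * (↑u⁻¹ : R) := by rw [hs]
        _ = s * (θ * (↑u⁻¹ : R)) := by rw [mul_assoc]
        _ = s * (s₂ * θ) := by rw [hs₂]
        _ = (s' * θ) * (s₂ * θ) := by rw [← hs']
        _ = s' * ((θ * s₂) * θ) := by rw [mul_assoc, ← mul_assoc θ]
        _ = s' * ((s₃ * θ) * θ) := by rw [hs₃]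
        _ = (s' * s₃) * (θ * θ) := by rw [mul_assoc s₃, ← mul_assoc]
        _ = (s' * s₃) * θ ^ 2 := by rw [sq]
      exact ⟨1, by rw [hθ0]; simp⟩
  have comm_pow_u : ∀ (k : ℕ) (u : Rˣ), ∃ v : Rˣ, θ ^ k * (u : R) = (v : R) * θ ^ k := by
    intro k
    induction k with
    | zero => exact fun u => ⟨u, by simp⟩
    | succ k ih =>
      intro u
      obtain ⟨v, hv⟩ := comm1u u
      obtain ⟨w, hw⟩ := ih v
      refine ⟨w, ?_⟩
      calc θ ^ (k + 1) * (u : R) = θ ^ k * (θ * (u : R)) := by rw [pow_succ, mul_assoc]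
      _ = θ ^ k * ((v : R) * θ) := by rw [hv]
      _ = (θ ^ k * (v : R)) * θ := by rw [mul_assoc]
      _ = ((w : R) * θ ^ k) * θ := by rw [hw]
      _ = (w : R) * θ ^ (k + 1) := by rw [mul_assoc, ← pow_succ]
  -- every element is a unit times a power of θ
  have rep_aux : ∀ (fuel : ℕ) (r : R) (i : ℕ), N ≤ i + fuel →
      ∃ (u : Rˣ) (j : ℕ), r * θ ^ i = (u : R) * θ ^ j := by
    intro fuel
    induction fuel with
    | zero =>
      intro r i hi
      have hθi : θ ^ i = 0 := by
        have : θ ^ i = θ ^ N * θ ^ (i - N) := by rw [← pow_add]; congr 1; omega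
        rw [this, hθN, zero_mul]
      exact ⟨1, N, by rw [hθi, hθN, mul_zero, mul_zero]⟩
    | succ fuel ih =>
      intro r i hi
      by_cases hr : IsUnit r
      · exact ⟨hr.unit, i, by rw [IsUnit.unit_spec]⟩
      · obtain ⟨s, hs⟩ := hgen r hr
        have hri : r * θ ^ i = s * θ ^ (i + 1) := by
          rw [hs, mul_assoc, ← pow_succ']
        rw [hri]
        exact ih s (i + 1) (by omega)
  have rep : ∀ x : R, ∃ (u : Rˣ) (j : ℕ), x = (u : R) * θ ^ j := by
    intro x
    obtain ⟨u, j, h⟩ := rep_aux N x 0 (by omega)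
    exact ⟨u, j, by simpa using h⟩
  -- left and right annihilators of θ coincide
  have ann : ∀ x : R, x * θ = 0 ↔ θ * x = 0 := by
    intro x
    obtain ⟨u, j, rfl⟩ := rep x
    obtain ⟨v, hv⟩ := comm1u u
    have h1 : ((u : R) * θ ^ j) * θ = (u : R) * θ ^ (j + 1) := by
      rw [mul_assoc, ← pow_succ]
    have h2 : θ * ((u : R) * θ ^ j) = (v : R) * θ ^ (j + 1) := by
      rw [← mul_assoc, hv, mul_assoc, ← pow_succ']
    rw [h1, h2, Units.mul_right_eq_zero, Units.mul_right_eq_zero]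
  -- Rθ = θR via a counting argument
  have hRθ_θR : Set.range (fun x : R => x * θ) = Set.range (fun x : R => θ * x) := by
    have hsub : Set.range (fun x : R => θ * x) ⊆ Set.range (fun x : R => x * θ) := by
      rintro _ ⟨x, rfl⟩
      obtain ⟨s, hs⟩ := comm1 x
      exact ⟨s, hs.symm⟩
    have hker : (AddMonoidHom.mulRight θ : R →+ R).ker = (AddMonoidHom.mulLeft θ).ker := by
      ext x
      simpa [AddMonoidHom.mem_ker] using ann x
    have hcard : Nat.card (AddMonoidHom.mulRight θ : R →+ R).range =
        Nat.card (AddMonoidHom.mulLeft θ : R →+ R).range := by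
      rw [← Nat.card_congr (QuotientAddGroup.quotientKerEquivRange
        (AddMonoidHom.mulRight θ : R →+ R)).toEquiv,
        ← Nat.card_congr (QuotientAddGroup.quotientKerEquivRange
        (AddMonoidHom.mulLeft θ : R →+ R)).toEquiv, hker]
    have hr1 : ((AddMonoidHom.mulRight θ : R →+ R).range : Set R) =
        Set.range (fun x : R => x * θ) := by
      ext y; simp [AddMonoidHom.mem_range]
    have hr2 : ((AddMonoidHom.mulLeft θ : R →+ R).range : Set R) =
        Set.range (fun x : R => θ * x) := by
      ext y; simp [AddMonoidHom.mem_range]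
    refine (Set.eq_of_subset_of_ncard_le hsub ?_ (Set.toFinite _)).symm
    have : (Set.range fun x : R => x * θ).ncard = (Set.range fun x : R => θ * x).ncard := by
      rw [← hr1, ← hr2, ← Nat.card_coe_set_eq, ← Nat.card_coe_set_eq]
      exact_mod_cast hcard
    omega
  -- reverse commutation with units
  have comm_rev_u : ∀ u : Rˣ, ∃ v : Rˣ, (u : R) * θ = θ * (v : R) := by
    intro u
    have hmem : (u : R) * θ ∈ Set.range (fun x : R => θ * x) := by
      rw [← hRθ_θR]; exact ⟨u, rfl⟩
    obtain ⟨y, hy0⟩ := hmem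
    obtain ⟨w, k, rfl⟩ := rep y
    have hy : θ * ((w : R) * θ ^ k) = (u : R) * θ := hy0
    obtain ⟨v₁, hv₁⟩ := comm1u w
    have huθ : (u : R) * θ = (v₁ : R) * θ ^ (k + 1) := by
      rw [← hy, ← mul_assoc, hv₁, mul_assoc, ← pow_succ']
    rcases Nat.eq_zero_or_pos k with hk0 | hk1
    · subst hk0
      refine ⟨w, ?_⟩
      rw [← hy]; simp
    · have hθ0 : θ = 0 := by
        apply theta_sq
        refine ⟨(↑u⁻¹ : R) * (v₁ : R) * θ ^ (k - 1), ?_⟩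
        have hstep : θ = (↑u⁻¹ : R) * ((v₁ : R) * θ ^ (k + 1)) := by
          rw [← huθ, ← mul_assoc, u.inv_mul, one_mul]
        have hpow : θ ^ (k + 1) = θ ^ (k - 1) * θ ^ 2 := by
          rw [← pow_add]; congr 1; omega
        calc θ = (↑u⁻¹ : R) * ((v₁ : R) * θ ^ (k + 1)) := hstep
        _ = (↑u⁻¹ : R) * ((v₁ : R) * (θ ^ (k - 1) * θ ^ 2)) := by rw [hpow]
        _ = (↑u⁻¹ : R) * (v₁ : R) * θ ^ (k - 1) * θ ^ 2 := by
              rw [← mul_assoc, ← mul_assoc]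
      exact ⟨1, by rw [hθ0]; simp⟩
  have comm_rev_pow_u : ∀ (k : ℕ) (u : Rˣ), ∃ v : Rˣ, (u : R) * θ ^ k = θ ^ k * (v : R) := by
    intro k
    induction k with
    | zero => exact fun u => ⟨u, by simp⟩
    | succ k ih =>
      intro u
      obtain ⟨v, hv⟩ := comm_rev_u u
      obtain ⟨w, hw⟩ := ih v
      refine ⟨w, ?_⟩
      calc (u : R) * θ ^ (k + 1) = ((u : R) * θ) * θ ^ k := by rw [pow_succ', ← mul_assoc]
      _ = (θ * (v : R)) * θ ^ k := by rw [hv]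
      _ = θ * ((v : R) * θ ^ k) := by rw [mul_assoc]
      _ = θ * (θ ^ k * (w : R)) := by rw [hw]
      _ = θ ^ (k + 1) * (w : R) := by rw [← mul_assoc, ← pow_succ']
  refine ⟨⟨?_, ?_⟩, ?_⟩
  · -- left ideals are right-closed
    intro I a ha r
    obtain ⟨u, i, hrep⟩ := rep a
    obtain ⟨s, hs⟩ := comm_pow i r
    have key : a * r = ((u : R) * s * (↑u⁻¹ : R)) * a := by
      calc a * r = (u : R) * (θ ^ i * r) := by rw [hrep, mul_assoc]
      _ = (u : R) * (s * θ ^ i) := by rw [hs]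
      _ = ((u : R) * s) * θ ^ i := by rw [mul_assoc]
      _ = ((u : R) * s) * ((↑u⁻¹ : R) * ((u : R) * θ ^ i)) := by
            rw [← mul_assoc (↑u⁻¹ : R), u.inv_mul, one_mul]
      _ = ((u : R) * s * (↑u⁻¹ : R)) * a := by rw [← mul_assoc, hrep]
    rw [key]
    exact Ideal.mul_mem_left I _ ha
  · -- right ideals are left-closed
    intro S hS a ha r
    obtain ⟨u, i, hrep⟩ := rep a
    obtain ⟨w, j, hw⟩ := rep (r * (u : R))
    obtain ⟨w', hw'⟩ := comm_rev_pow_u i w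
    obtain ⟨y, hy⟩ := comm_rev_pow_u i u⁻¹
    have key : r * a = a * ((y : R) * ((w' : R) * θ ^ j)) := by
      calc r * a = (r * (u : R)) * θ ^ i := by rw [hrep, mul_assoc]
      _ = ((w : R) * θ ^ j) * θ ^ i := by rw [hw]
      _ = (w : R) * θ ^ (j + i) := by rw [mul_assoc, ← pow_add]
      _ = (w : R) * (θ ^ i * θ ^ j) := by rw [← pow_add, Nat.add_comm]
      _ = ((w : R) * θ ^ i) * θ ^ j := by rw [mul_assoc]
      _ = (θ ^ i * (w' : R)) * θ ^ j := by rw [hw']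
      _ = ((u : R) * ((↑u⁻¹ : R) * θ ^ i)) * ((w' : R) * θ ^ j) := by
            rw [← mul_assoc (u : R), u.mul_inv, one_mul, mul_assoc]
      _ = ((u : R) * (θ ^ i * (y : R))) * ((w' : R) * θ ^ j) := by rw [hy]
      _ = a * ((y : R) * ((w' : R) * θ ^ j)) := by
            rw [hrep, mul_assoc, mul_assoc, mul_assoc]
    rw [key]
    exact hS a ha _
  · -- symmetric
    intro a b c habc
    obtain ⟨u, i, ha⟩ := rep a
    obtain ⟨v, j, hb⟩ := rep b
    obtain ⟨v', hv'⟩ := comm_pow_u i v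
    obtain ⟨u', hu'⟩ := comm_pow_u j u
    have hab : a * b = ((u : R) * (v' : R)) * θ ^ (i + j) := by
      calc a * b = (u : R) * ((θ ^ i * (v : R)) * θ ^ j) := by
            rw [ha, hb, mul_assoc, ← mul_assoc (θ ^ i)]
      _ = (u : R) * (((v' : R) * θ ^ i) * θ ^ j) := by rw [hv']
      _ = ((u : R) * (v' : R)) * θ ^ (i + j) := by
            rw [mul_assoc (v' : R), ← pow_add, ← mul_assoc]
    have hba : b * a = ((v : R) * (u' : R)) * θ ^ (i + j) := by
      calc b * a = (v : R) * ((θ ^ j * (u : R)) * θ ^ i) := by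
            rw [ha, hb, mul_assoc, ← mul_assoc (θ ^ j)]
      _ = (v : R) * (((u' : R) * θ ^ j) * θ ^ i) := by rw [hu']
      _ = ((v : R) * (u' : R)) * θ ^ (j + i) := by
            rw [mul_assoc (u' : R), ← pow_add, ← mul_assoc]
      _ = ((v : R) * (u' : R)) * θ ^ (i + j) := by rw [Nat.add_comm j i]
    have hz : θ ^ (i + j) * c = 0 := by
      have h1 : ((u : R) * ((v' : R) * (θ ^ (i + j) * c))) = 0 := by
        rw [← mul_assoc, ← mul_assoc, ← hab, habc]
      rw [Units.mul_right_eq_zero, Units.mul_right_eq_zero] at h1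
      exact h1
    calc b * a * c = ((v : R) * (u' : R)) * (θ ^ (i + j) * c) := by
          rw [hba, mul_assoc]
    _ = 0 := by rw [hz, mul_zero]
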